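/- Simplification of the mcG(q) coefficient matrix: Let q ≥ 1, let 0 = s₀ < s₁ < ⋯ < s_q = 1 be distinct nodes in [0,1], let λ₀, …, λ_q be the corresponding Lagrange basis polynomials of degree q (λ_n(s_m) = δ_{nm}), and let v₁, …, v_q be any basis of the space of polynomials of degree ≤ q − 1. Define a_{mn} = ∫₀¹ λ_n'(t) v_m(t) dt for m = 1,…,q and n = 0,1,…,q, and let A = (a_{mn})_{m,n=1}^{q} be the q×q matrix omitting the column n = 0. Then A is invertible, and its inverse Ā = (ā_{mn}) satisfies Σ_{n=1}^{q} ā_{mn} a_{n0} = −1 for every m = 1,…,q. -/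

import Mathlib

open MeasureTheory intervalIntegral Polynomial Finset

/-- The Lagrange basis polynomial for nodes `s : Fin m → ℝ` associated with the node `n`:
`λ_n(x) = ∏_{k ≠ n} (x − s_k)/(s_n − s_k)`. -/
noncomputable def lagrangeBasis {m : ℕ} (s : Fin m → ℝ) (n : Fin m) : Polynomial ℝ :=
  ∏ k ∈ Finset.univ.erase n,
    Polynomial.C (s n - s k)⁻¹ * (Polynomial.X - Polynomial.C (s k))

lemma sq_integral_zero (g : ℝ[X]) (h : (∫ x in (0:ℝ)..1, (g.eval x) * (g.eval x)) = 0) :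
    g = 0 := by
  by_contra hg
  have hint : IntervalIntegrable (fun x => g.eval x * g.eval x) volume 0 1 :=
    (g.continuous.mul g.continuous).intervalIntegrable _ _
  have hnn : 0 ≤ᵐ[volume] fun x => g.eval x * g.eval x :=
    Filter.Eventually.of_forall fun x => mul_self_nonneg _
  have key : 0 < ∫ x in (0:ℝ)..1, g.eval x * g.eval x := by
    rw [intervalIntegral.integral_pos_iff_support_of_nonneg_ae hnn hint]
    refine ⟨one_pos, ?_⟩
    have hsub : Set.Ioc (0:ℝ) 1 \ {x | g.IsRoot x} ⊆
        Function.support (fun x => g.eval x * g.eval x) ∩ Set.Ioc 0 1 := by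
      rintro x ⟨hx1, hx2⟩
      exact ⟨by simpa [Function.mem_support, mul_self_eq_zero] using hx2, hx1⟩
    have hm : volume (Set.Ioc (0:ℝ) 1 \ {x | g.IsRoot x}) = 1 := by
      rw [measure_diff_null ((Polynomial.finite_setOf_isRoot hg).measure_zero volume)]
      simp
    have hmm := measure_mono (μ := volume) hsub
    rw [hm] at hmm
    exact lt_of_lt_of_le (by norm_num) hmm
  rw [h] at key; exact lt_irrefl _ key


set_option maxHeartbeats 1000000 in
/-- Simplification of the mcG(q) coefficient matrix (Lemma `lem:simpl,cg`):
with `0 = s₀ < ⋯ < s_q = 1`, Lagrange basis polynomials `λ₀, …, λ_q`, and any basis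
`v₁, …, v_q` of the polynomials of degree `≤ q − 1`, the matrix
`A = (a_{mn})_{m,n=1}^q`, `a_{mn} = ∫₀¹ λ_n'(t) v_m(t) dt`, is invertible and its inverse
`Ā` satisfies `Σ_{n=1}^q ā_{mn} a_{n0} = −1` for every `m`, where `a_{n0} = ∫₀¹ λ₀'(t) v_n(t) dt`. -/
theorem mcG_matrix_simplification
    (q : ℕ) (hq : 1 ≤ q)
    (s : Fin (q + 1) → ℝ) (hs : StrictMono s)
    (hs0 : s 0 = 0) (hsq : s (Fin.last q) = 1)
    (v : Fin q → Polynomial ℝ)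
    (hvdeg : ∀ m, (v m).natDegree ≤ q - 1)
    (hvbasis : LinearIndependent ℝ v)
    (A : Matrix (Fin q) (Fin q) ℝ)
    (hA : ∀ m n, A m n =
      ∫ x in (0:ℝ)..1, ((lagrangeBasis s n.succ).derivative.eval x) * (v m).eval x) :
    IsUnit A ∧ ∀ m : Fin q,
      (∑ n : Fin q, A⁻¹ m n *
        ∫ x in (0:ℝ)..1, ((lagrangeBasis s 0).derivative.eval x) * (v n).eval x) = -1 := by
  classical
  have hsinj : Function.Injective s := hs.injective
  have hlag : ∀ n : Fin (q+1), lagrangeBasis s n = Lagrange.basis Finset.univ s n :=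
    fun n => rfl
  have heval_self : ∀ n : Fin (q+1), (lagrangeBasis s n).eval (s n) = 1 := fun n => by
    rw [hlag]; exact Lagrange.eval_basis_self hsinj.injOn (mem_univ n)
  have heval_ne : ∀ n m : Fin (q+1), n ≠ m → (lagrangeBasis s n).eval (s m) = 0 :=
    fun n m h => by rw [hlag]; exact Lagrange.eval_basis_of_ne h (mem_univ m)
  have hsum : ∑ j : Fin (q+1), lagrangeBasis s j = 1 := by
    simp_rw [hlag]; exact Lagrange.sum_basis hsinj.injOn univ_nonempty
  have h0d : (lagrangeBasis s 0).derivative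
      = - ∑ k : Fin q, (lagrangeBasis s k.succ).derivative := by
    have h : (lagrangeBasis s 0).derivative
        + ∑ k : Fin q, (lagrangeBasis s k.succ).derivative = 0 := by
      have h2 : derivative (∑ j : Fin (q+1), lagrangeBasis s j) = 0 := by rw [hsum]; simp
      rwa [map_sum, Fin.sum_univ_succ] at h2
    exact eq_neg_of_add_eq_zero_left h
  -- combination lemma
  have hcomb : ∀ (c : Fin q → ℝ) (w : ℝ[X]),
      (∫ x in (0:ℝ)..1,
        ((∑ n : Fin q, Polynomial.C (c n) * lagrangeBasis s n.succ).derivative.eval x)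
          * w.eval x)
      = ∑ n : Fin q, c n *
          ∫ x in (0:ℝ)..1, ((lagrangeBasis s n.succ).derivative.eval x) * w.eval x := by
    intro c w
    have hfun : ∀ x : ℝ,
        ((∑ n : Fin q, Polynomial.C (c n) * lagrangeBasis s n.succ).derivative.eval x)
          * w.eval x
        = ∑ n : Fin q, c n * (((lagrangeBasis s n.succ).derivative.eval x) * w.eval x) := by
      intro x
      rw [Polynomial.derivative_sum, Polynomial.eval_finset_sum, Finset.sum_mul]
      refine Finset.sum_congr rfl fun n _ => ?_
      rw [Polynomial.derivative_C_mul, Polynomial.eval_mul, Polynomial.eval_C, mul_assoc]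
    simp_rw [hfun]
    have hintsum := intervalIntegral.integral_finset_sum (μ := volume) (a := (0:ℝ)) (b := 1)
      (s := Finset.univ)
      (f := fun (n : Fin q) (x : ℝ) =>
        c n * (((lagrangeBasis s n.succ).derivative.eval x) * w.eval x))
      (fun i _ =>
        (continuous_const.mul
          (((lagrangeBasis s i.succ).derivative.continuous.mul w.continuous))).intervalIntegrable _ _)
    rw [hintsum]
    simp_rw [intervalIntegral.integral_const_mul]
  -- kernel trivial
  have hker : ∀ c : Fin q → ℝ, A.mulVec c = 0 → c = 0 := by
    intro c hc
    set p : ℝ[X] := ∑ n : Fin q, Polynomial.C (c n) * lagrangeBasis s n.succ with hp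
    have hzero : ∀ m : Fin q,
        (∫ x in (0:ℝ)..1, (p.derivative.eval x) * (v m).eval x) = 0 := by
      intro m
      have h1 := congrFun hc m
      simp only [Matrix.mulVec, dotProduct, Pi.zero_apply] at h1
      have h2 : ∑ n : Fin q, c n *
          (∫ x in (0:ℝ)..1, ((lagrangeBasis s n.succ).derivative.eval x) * (v m).eval x)
          = ∑ n : Fin q, A m n * c n :=
        Finset.sum_congr rfl fun n _ => by rw [hA m n]; ring
      rw [hp, hcomb c (v m), h2, h1]
    have hdeg : p.derivative ∈ Polynomial.degreeLT ℝ q := by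
      rw [Polynomial.mem_degreeLT]
      rcases eq_or_ne p 0 with h | h
      · rw [h]
        simp only [map_zero, Polynomial.degree_zero]
        exact_mod_cast WithBot.bot_lt_coe q
      · refine lt_of_lt_of_le (Polynomial.degree_derivative_lt h) ?_
        rw [hp]
        refine le_trans (Polynomial.degree_sum_le _ _) ?_
        rw [Finset.sup_le_iff]
        intro n _
        refine le_trans (Polynomial.degree_mul_le _ _) ?_
        refine le_trans (add_le_add Polynomial.degree_C_le le_rfl) ?_
        rw [zero_add, hlag, Lagrange.degree_basis hsinj.injOn (mem_univ n.succ)]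
        simp
    have hvW : ∀ m, v m ∈ Polynomial.degreeLT ℝ q := by
      intro m
      rw [Polynomial.mem_degreeLT]
      refine lt_of_le_of_lt (Polynomial.degree_le_natDegree) ?_
      exact_mod_cast lt_of_le_of_lt (hvdeg m) (Nat.sub_lt hq one_pos)
    haveI : FiniteDimensional ℝ (Polynomial.degreeLT ℝ q) :=
      LinearEquiv.finiteDimensional (Polynomial.degreeLTEquiv ℝ q).symm
    have hfr : Module.finrank ℝ (Polynomial.degreeLT ℝ q) = q := by
      rw [(Polynomial.degreeLTEquiv ℝ q).finrank_eq]; simp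
    set v' : Fin q → Polynomial.degreeLT ℝ q := fun m => ⟨v m, hvW m⟩ with hv'
    have hli : LinearIndependent ℝ v' := by
      apply LinearIndependent.of_comp (Polynomial.degreeLT ℝ q).subtype
      exact hvbasis
    haveI : Nonempty (Fin q) := ⟨⟨0, hq⟩⟩
    have hspan : Submodule.span ℝ (Set.range v') = ⊤ :=
      hli.span_eq_top_of_card_eq_finrank (by simp [hfr])
    have hmem : (⟨p.derivative, hdeg⟩ : Polynomial.degreeLT ℝ q)
        ∈ Submodule.span ℝ (Set.range v') := by rw [hspan]; trivial
    obtain ⟨d, hd⟩ := (Submodule.mem_span_range_iff_exists_fun ℝ).mp hmem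
    have hd' : ∑ i : Fin q, d i • v i = p.derivative := by
      have h2 := congrArg Subtype.val hd
      simpa [hv'] using h2
    have hsq : (∫ x in (0:ℝ)..1, (p.derivative.eval x) * (p.derivative.eval x)) = 0 := by
      have hfun : ∀ x : ℝ, (p.derivative.eval x) * (p.derivative.eval x)
          = ∑ i : Fin q, d i * ((p.derivative.eval x) * (v i).eval x) := by
        intro x
        have h4 : (p.derivative.eval x) * (p.derivative.eval x)
            = (p.derivative.eval x) * ((∑ i : Fin q, d i • v i).eval x) := by rw [hd']
        rw [h4, eval_finset_sum, Finset.mul_sum]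
        refine Finset.sum_congr rfl fun i _ => ?_
        rw [Polynomial.eval_smul]
        simp only [smul_eq_mul]
        ring
      simp_rw [hfun]
      have hintsum := intervalIntegral.integral_finset_sum (μ := volume) (a := (0:ℝ)) (b := 1)
        (s := Finset.univ)
        (f := fun (i : Fin q) (x : ℝ) =>
          d i * ((p.derivative.eval x) * (v i).eval x))
        (fun i _ =>
          (continuous_const.mul
            (p.derivative.continuous.mul (v i).continuous)).intervalIntegrable _ _)
      rw [hintsum]
      simp_rw [intervalIntegral.integral_const_mul]
      exact Finset.sum_eq_zero fun i _ => by rw [hzero i, mul_zero]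
    have hpd : p.derivative = 0 := sq_integral_zero p.derivative hsq
    have hnd : p.natDegree = 0 := Polynomial.natDegree_eq_zero_of_derivative_eq_zero hpd
    obtain ⟨a, ha⟩ := Polynomial.natDegree_eq_zero.mp hnd
    have h0e : p.eval (s 0) = 0 := by
      rw [hp, eval_finset_sum]
      refine Finset.sum_eq_zero fun n _ => ?_
      rw [eval_mul, eval_C, heval_ne n.succ 0 (Fin.succ_ne_zero n), mul_zero]
    have hpz : p = 0 := by
      have ha0 : a = 0 := by rw [← ha] at h0e; simpa using h0e
      rw [← ha, ha0, map_zero]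
    funext m
    have h3 := congrArg (Polynomial.eval (s m.succ)) (hp.symm.trans hpz)
    simp only [eval_finset_sum, eval_mul, eval_C, Polynomial.eval_zero] at h3
    rw [Finset.sum_eq_single m
      (fun n _ hnm => by
        rw [heval_ne _ _ (fun h => hnm (Fin.succ_injective q h)), mul_zero])
      (by simp)] at h3
    rw [heval_self, mul_one] at h3
    simpa using h3
  have hdet : IsUnit A.det := by
    rw [isUnit_iff_ne_zero]
    intro h
    obtain ⟨c, hc0, hc⟩ := Matrix.exists_mulVec_eq_zero_iff.mpr h
    exact hc0 (hker c hc)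
  refine ⟨(Matrix.isUnit_iff_isUnit_det A).mpr hdet, ?_⟩
  intro m
  have hb : ∀ n : Fin q,
      (∫ x in (0:ℝ)..1, ((lagrangeBasis s 0).derivative.eval x) * (v n).eval x)
      = A.mulVec (fun _ => (-1:ℝ)) n := by
    intro n
    simp only [Matrix.mulVec, dotProduct]
    rw [h0d]
    have hfun : ∀ x : ℝ,
        ((-∑ k : Fin q, (lagrangeBasis s k.succ).derivative).eval x) * (v n).eval x
        = ∑ k : Fin q, -(((lagrangeBasis s k.succ).derivative.eval x) * (v n).eval x) := by
      intro x
      simp [eval_finset_sum, Finset.sum_mul]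
    simp_rw [hfun]
    have hintsum := intervalIntegral.integral_finset_sum (μ := volume) (a := (0:ℝ)) (b := 1)
      (s := Finset.univ)
      (f := fun (k : Fin q) (x : ℝ) =>
        -(((lagrangeBasis s k.succ).derivative.eval x) * (v n).eval x))
      (fun k _ =>
        (((lagrangeBasis s k.succ).derivative.continuous.mul
          (v n).continuous).intervalIntegrable _ _).neg)
    rw [hintsum]
    refine Finset.sum_congr rfl fun k _ => ?_
    rw [intervalIntegral.integral_neg, hA n k]; ring
  have hgoal : ∑ n : Fin q, A⁻¹ m n *
      (∫ x in (0:ℝ)..1, ((lagrangeBasis s 0).derivative.eval x) * (v n).eval x)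
      = (A⁻¹.mulVec (A.mulVec fun _ => (-1:ℝ))) m := by
    simp only [Matrix.mulVec, dotProduct]
    exact Finset.sum_congr rfl fun n _ => by
      rw [hb n]; simp [Matrix.mulVec, dotProduct]
  rw [hgoal, Matrix.mulVec_mulVec, Matrix.nonsing_inv_mul A hdet, Matrix.one_mulVec]
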